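/- Let a_• be a graded sequence of nonzero monomial ideals in R = K[X_1,…,X_n] and let b_• be the corresponding sequence of asymptotic multiplier ideals. Then lc(a_•) = lc(b_•); that is, sup_{m≥1} m·lc(a_m) = inf_{m≥1} m·lc(b_m) as elements of (0, ∞]. -/

import Mathlib

open Filter MvPolynomial
open scoped Pointwise

/-- An ideal of `K[X_1,…,X_n]` is supported at the origin if it contains a power
of the maximal ideal `(X_1,…,X_n)`. -/
def SupportedAtOrigin {K : Type*} [Field K] {n : ℕ}
    (a : Ideal (MvPolynomial (Fin n) K)) : Prop :=
  ∃ k : ℕ, (Ideal.span (Set.range (X : Fin n → MvPolynomial (Fin n) K))) ^ k ≤ a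

/-- The multiplicity `e(a) = limsup_k n!·dim_K(R/a^k)/k^n` of an ideal of
`K[X_1,…,X_n]` supported at the origin. -/
noncomputable def polyMult {K : Type*} [Field K] {n : ℕ}
    (a : Ideal (MvPolynomial (Fin n) K)) : ℝ :=
  limsup (fun k : ℕ =>
    (Nat.factorial n * Module.finrank K (MvPolynomial (Fin n) K ⧸ a ^ k) : ℝ) / (k : ℝ) ^ n) atTop

/-- The multiplicity `e(a_•) = limsup_m e(a_m)/m^n` of a sequence of ideals. -/
noncomputable def polyMultSeq {K : Type*} [Field K] {n : ℕ}
    (a : ℕ → Ideal (MvPolynomial (Fin n) K)) : ℝ :=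
  limsup (fun m : ℕ => polyMult (a m) / (m : ℝ) ^ n) atTop

/-- The volume `vol(a_•) = limsup_m n!·dim_K(R/a_m)/m^n` of a sequence of ideals. -/
noncomputable def polyVolSeq {K : Type*} [Field K] {n : ℕ}
    (a : ℕ → Ideal (MvPolynomial (Fin n) K)) : ℝ :=
  limsup (fun m : ℕ =>
    (Nat.factorial n * Module.finrank K (MvPolynomial (Fin n) K ⧸ a m) : ℝ) / (m : ℝ) ^ n) atTop

/-- A monomial ideal: an ideal generated by the monomials it contains. -/
def IsMonomialIdeal {K : Type*} [Field K] {n : ℕ}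
    (a : Ideal (MvPolynomial (Fin n) K)) : Prop :=
  a = Ideal.span ((fun v : Fin n →₀ ℕ => (monomial v (1 : K) : MvPolynomial (Fin n) K)) ''
        {v : Fin n →₀ ℕ | monomial v (1 : K) ∈ a})

/-- The Newton polyhedron of a (monomial) ideal: the convex hull in `ℝ^n` of the
exponents of the monomials lying in the ideal. -/
def newton {K : Type*} [Field K] {n : ℕ} (a : Ideal (MvPolynomial (Fin n) K)) :
    Set (Fin n → ℝ) :=
  convexHull ℝ ((fun v : Fin n →₀ ℕ => fun i => (v i : ℝ)) ''
    {v : Fin n →₀ ℕ | monomial v (1 : K) ∈ a})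

/-- The multiplier ideal `I(λ·a)` of a monomial ideal `a`: it is generated by the
monomials `X^u` with `u + e ∈ Int(λ·P_a)`, where `e = (1,…,1)`. -/
noncomputable def multiplierIdeal {K : Type*} [Field K] {n : ℕ} (lam : ℝ)
    (a : Ideal (MvPolynomial (Fin n) K)) : Ideal (MvPolynomial (Fin n) K) :=
  Ideal.span ((fun v : Fin n →₀ ℕ => (monomial v (1 : K) : MvPolynomial (Fin n) K)) ''
    {v : Fin n →₀ ℕ | (fun i => (v i : ℝ) + 1) ∈ interior (lam • newton a)})

/-- The asymptotic multiplier ideal `b_m = I(m·‖a_•‖)` of a graded sequence of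
monomial ideals: it is generated by the monomials `X^u` with
`u + e ∈ Int((m/p)·P_{a_p})` for some `p ≥ 1`. -/
noncomputable def asympMultiplierIdeal {K : Type*} [Field K] {n : ℕ}
    (a : ℕ → Ideal (MvPolynomial (Fin n) K)) (m : ℕ) : Ideal (MvPolynomial (Fin n) K) :=
  Ideal.span ((fun v : Fin n →₀ ℕ => (monomial v (1 : K) : MvPolynomial (Fin n) K)) ''
    {v : Fin n →₀ ℕ | ∃ p : ℕ, 1 ≤ p ∧
      (fun i => (v i : ℝ) + 1) ∈ interior (((m : ℝ) / (p : ℝ)) • newton (a p))})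

/-- The exponent of the leading monomial of `f` with respect to a monomial order. -/
noncomputable def leadExp {K : Type*} [Field K] {n : ℕ} (mo : MonomialOrder (Fin n))
    (f : MvPolynomial (Fin n) K) : Fin n →₀ ℕ :=
  mo.toSyn.symm (f.support.sup mo.toSyn)

/-- The initial ideal `in_>(a)`: the monomial ideal generated by the leading
monomials of the nonzero elements of `a`. -/
noncomputable def initialIdeal {K : Type*} [Field K] {n : ℕ} (mo : MonomialOrder (Fin n))
    (a : Ideal (MvPolynomial (Fin n) K)) : Ideal (MvPolynomial (Fin n) K) :=
  Ideal.span ((fun f : MvPolynomial (Fin n) K =>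
      (monomial (leadExp mo f) (1 : K) : MvPolynomial (Fin n) K)) ''
    {f : MvPolynomial (Fin n) K | f ∈ a ∧ f ≠ 0})

open scoped ENNReal

/-- The log canonical threshold of a monomial ideal, via Howald's theorem:
`1/lc(a) = inf{μ > 0 : μ·(1,…,1) ∈ P_a}`, with values in `(0,∞]`. -/
noncomputable def lcMonomial {K : Type*} [Field K] {n : ℕ}
    (a : Ideal (MvPolynomial (Fin n) K)) : ℝ≥0∞ :=
  (ENNReal.ofReal (sInf {μ : ℝ | 0 < μ ∧ (fun _ : Fin n => μ) ∈ newton a}))⁻¹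

namespace LCAux

variable {K : Type*} [Field K] {n : ℕ}

lemma exp_mem_newton {a : Ideal (MvPolynomial (Fin n) K)} {v : Fin n →₀ ℕ}
    (hv : monomial v (1:K) ∈ a) : (fun i => (v i : ℝ)) ∈ newton a :=
  subset_convexHull ℝ _ ⟨v, hv, rfl⟩

lemma aux_box {a : Ideal (MvPolynomial (Fin n) K)} (s : Finset (Fin n)) :
    ∀ v : Fin n →₀ ℕ, monomial v (1:K) ∈ a →
    ∀ d : Fin n → ℝ, (∀ i, 0 ≤ d i) → (∀ i ∉ s, d i = 0) →
    (fun i => (v i : ℝ)) + d ∈ newton a := by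
  induction s using Finset.induction with
  | empty =>
    intro v hv d hd hsupp
    have hd0 : d = 0 := funext fun i => hsupp i (by simp)
    subst hd0
    simpa using exp_mem_newton hv
  | @insert i s hi ih =>
    intro v hv d hd hsupp
    have ht : 0 ≤ d i := hd i
    set d' := Function.update d i 0 with hd'_def
    have hd' : ∀ j, 0 ≤ d' j := by
      intro j
      by_cases hj : j = i
      · subst hj; simp [hd'_def]
      · rw [hd'_def, Function.update_of_ne hj]; exact hd j
    have hsupp' : ∀ j ∉ s, d' j = 0 := by
      intro j hj
      by_cases hji : j = i
      · subst hji; simp [hd'_def]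
      · rw [hd'_def, Function.update_of_ne hji]
        exact hsupp j (by simp [hji, hj])
    rcases eq_or_lt_of_le ht with hteq | htpos
    · have hdi : d i = 0 := hteq.symm
      have hdd : d' = d := by
        rw [hd'_def, ← hdi]; exact Function.update_eq_self i d
      rw [← hdd]
      exact ih v hv d' hd' hsupp'
    · set N : ℕ := ⌈d i⌉₊ with hN_def
      have hNpos : 0 < N := Nat.ceil_pos.mpr htpos
      have htN : d i ≤ (N:ℝ) := Nat.le_ceil (d i)
      have hNne : (N:ℝ) ≠ 0 := by positivity
      set v' := v + Finsupp.single i N with hv'_def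
      have hv' : monomial v' (1:K) ∈ a := by
        have heq : monomial v' (1:K) = monomial (Finsupp.single i N) (1:K) * monomial v 1 := by
          rw [monomial_mul, one_mul, add_comm]
        rw [heq]
        exact Ideal.mul_mem_left _ _ hv
      have hA := ih v hv d' hd' hsupp'
      have hB := ih v' hv' d' hd' hsupp'
      set θ := d i / (N:ℝ) with hθ_def
      have hθ0 : 0 ≤ θ := by positivity
      have hθ1 : θ ≤ 1 := (div_le_one (by positivity)).mpr htN
      have hθN : θ * (N:ℝ) = d i := div_mul_cancel₀ (d i) hNne
      have key : ((fun j => ((v j : ℕ) : ℝ)) + d) =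
          (1 - θ) • ((fun j => ((v j : ℕ) : ℝ)) + d') + θ • ((fun j => ((v' j : ℕ) : ℝ)) + d') := by
        funext j
        simp only [Pi.add_apply, Pi.smul_apply, smul_eq_mul]
        by_cases hji : j = i
        · subst hji
          have h1 : ((v' j : ℕ) : ℝ) = (v j : ℝ) + (N:ℝ) := by
            rw [hv'_def]; push_cast [Finsupp.add_apply, Finsupp.single_apply]; simp
          have hd'j : d' j = 0 := by simp [hd'_def]
          rw [h1, hd'j]
          have h2 : (1 - θ) * ((v j:ℝ) + 0) + θ * (((v j:ℝ) + (N:ℝ)) + 0)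
              = (v j:ℝ) + θ * (N:ℝ) := by ring
          rw [h2, hθN]
        · have h1 : ((v' j : ℕ) : ℝ) = (v j : ℝ) := by
            have : v' j = v j := by
              rw [hv'_def, Finsupp.add_apply, Finsupp.single_apply,
                if_neg (fun h : i = j => hji h.symm), add_zero]
            rw [this]
          have hd'j : d' j = d j := by rw [hd'_def, Function.update_of_ne hji]
          rw [h1, hd'j]
          ring
      rw [key]
      exact (convex_convexHull ℝ _) hA hB (by linarith) hθ0 (by ring)

lemma newton_upclosed {a : Ideal (MvPolynomial (Fin n) K)} {x d : Fin n → ℝ}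
    (hx : x ∈ newton a) (hd : ∀ i, 0 ≤ d i) : x + d ∈ newton a := by
  set C : Set (Fin n → ℝ) := {y | y + d ∈ newton a} with hC_def
  have hCconv : Convex ℝ C := by
    intro y hy z hz p q hp hq hpq
    have heq : (p • y + q • z) + d = p • (y + d) + q • (z + d) := by
      funext j; simp only [Pi.add_apply, Pi.smul_apply, smul_eq_mul]
      linear_combination (-(d j)) * hpq
    show (p • y + q • z) + d ∈ newton a
    rw [heq]
    exact (convex_convexHull ℝ _) hy hz hp hq hpq
  have himg : ((fun v : Fin n →₀ ℕ => fun i => (v i : ℝ)) ''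
      {v : Fin n →₀ ℕ | monomial v (1 : K) ∈ a}) ⊆ C := by
    rintro _ ⟨v, hv, rfl⟩
    exact aux_box Finset.univ v hv d hd (fun i hi => absurd (Finset.mem_univ i) hi)
  exact convexHull_min himg hCconv hx

lemma newton_nonneg {a : Ideal (MvPolynomial (Fin n) K)} {x : Fin n → ℝ}
    (hx : x ∈ newton a) : ∀ i, 0 ≤ x i := by
  have hsub : newton a ⊆ {y : Fin n → ℝ | ∀ i, 0 ≤ y i} := by
    apply convexHull_min
    · rintro _ ⟨v, _, rfl⟩ i; positivity
    · intro y hy z hz p q hp hq hpq i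
      simp only [Pi.add_apply, Pi.smul_apply, smul_eq_mul]
      have := hy i; have := hz i
      positivity
  exact hsub hx

end LCAux

namespace LCAux

variable {K : Type*} [Field K] {n : ℕ}

/-- The set whose infimum is the lct threshold. -/
def Mset (a : Ideal (MvPolynomial (Fin n) K)) : Set ℝ :=
  {μ : ℝ | 0 < μ ∧ (fun _ : Fin n => μ) ∈ newton a}

lemma Mset_bddBelow (a : Ideal (MvPolynomial (Fin n) K)) : BddBelow (Mset a) :=
  ⟨0, fun _ hμ => hμ.1.le⟩

lemma sInf_Mset_nonneg (a : Ideal (MvPolynomial (Fin n) K)) : 0 ≤ sInf (Mset a) :=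
  Real.sInf_nonneg (fun _ hμ => hμ.1.le)

lemma Mset_upclosed {a : Ideal (MvPolynomial (Fin n) K)} {μ μ' : ℝ}
    (hμ : μ ∈ Mset a) (h : μ ≤ μ') : μ' ∈ Mset a := by
  refine ⟨lt_of_lt_of_le hμ.1 h, ?_⟩
  have := newton_upclosed hμ.2 (d := fun _ => μ' - μ) (fun i => by simp; linarith)
  convert this using 1
  funext i; simp

lemma exists_exp {a : Ideal (MvPolynomial (Fin n) K)} (hmon : IsMonomialIdeal a)
    (hne : a ≠ ⊥) : ∃ v : Fin n →₀ ℕ, monomial v (1:K) ∈ a := by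
  by_contra hc
  push_neg at hc
  apply hne
  have : {v : Fin n →₀ ℕ | monomial v (1 : K) ∈ a} = ∅ := Set.eq_empty_iff_forall_notMem.mpr hc
  rw [hmon, this, Set.image_empty, Ideal.span_empty]

lemma Mset_nonempty {a : Ideal (MvPolynomial (Fin n) K)} (hmon : IsMonomialIdeal a)
    (hne : a ≠ ⊥) : (Mset a).Nonempty := by
  obtain ⟨v, hv⟩ := exists_exp hmon hne
  set μ : ℝ := (∑ i, (v i : ℝ)) + 1 with hμ_def
  have hsum : 0 ≤ ∑ i, (v i : ℝ) := Finset.sum_nonneg fun i _ => by positivity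
  refine ⟨μ, by positivity, ?_⟩
  have hle : ∀ i, (v i : ℝ) ≤ ∑ j, (v j : ℝ) :=
    fun i => Finset.single_le_sum (f := fun j => ((v j : ℕ):ℝ)) (fun j _ => by positivity) (Finset.mem_univ i)
  have := newton_upclosed (exp_mem_newton hv) (d := fun i => μ - (v i : ℝ))
    (fun i => by have := hle i; simp only [hμ_def]; linarith)
  convert this using 1
  funext i; simp

section Graded

variable (a : ℕ → Ideal (MvPolynomial (Fin n) K))

lemma pow_mem_graded (hgraded : ∀ p q : ℕ, a p * a q ≤ a (p + q)) (p : ℕ)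
    {x : MvPolynomial (Fin n) K} (hx : x ∈ a p) :
    ∀ q : ℕ, 1 ≤ q → x ^ q ∈ a (p * q) := by
  intro q hq
  induction q with
  | zero => omega
  | succ k ih =>
    rcases Nat.lt_or_ge k 1 with h1 | h2
    · have hk : k = 0 := by omega
      subst hk
      simpa using hx
    · have hik := ih h2
      have hmul : x ^ k * x ∈ a (p * k) * a p := Ideal.mul_mem_mul hik hx
      have hmem := hgraded (p * k) p hmul
      have heq : p * k + p = p * (k + 1) := by ring
      rw [heq] at hmem
      rwa [pow_succ]

lemma smul_newton_subset (hgraded : ∀ p q : ℕ, a p * a q ≤ a (p + q)) (p q : ℕ)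
    (hq : 1 ≤ q) : (q : ℝ) • newton (a p) ⊆ newton (a (p * q)) := by
  rw [newton, ← convexHull_smul]
  apply convexHull_min ?_ (convex_convexHull ℝ _)
  rintro _ ⟨_, ⟨v, hv, rfl⟩, rfl⟩
  apply subset_convexHull
  refine ⟨q • v, ?_, ?_⟩
  · show monomial (q • v) (1:K) ∈ a (p * q)
    have : monomial (q • v) (1:K) = (monomial v (1:K)) ^ q := by
      rw [monomial_pow, one_pow]
    rw [this]
    exact pow_mem_graded a hgraded p hv q hq
  · funext i
    simp only [Pi.smul_apply, smul_eq_mul, Finsupp.smul_apply, smul_eq_mul]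
    push_cast
    ring

/-- The "asymptotic Newton body" as a membership predicate. -/
def Qset : Set (Fin n → ℝ) :=
  {x | ∃ p : ℕ, 1 ≤ p ∧ (p : ℝ) • x ∈ newton (a p)}

lemma Qset_convex (hgraded : ∀ p q : ℕ, a p * a q ≤ a (p + q)) : Convex ℝ (Qset a) := by
  intro x hx y hy A B hA hB hAB
  obtain ⟨p, hp, hxp⟩ := hx
  obtain ⟨q, hq, hyq⟩ := hy
  have hpq : 1 ≤ p * q := Nat.one_le_iff_ne_zero.mpr (by positivity)
  refine ⟨p * q, hpq, ?_⟩
  have h1 : ((p * q : ℕ) : ℝ) • x ∈ newton (a (p * q)) := by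
    have heq : ((p * q : ℕ) : ℝ) • x = (q : ℝ) • ((p : ℝ) • x) := by
      rw [smul_smul]; push_cast; rw [mul_comm]
    rw [heq]
    exact smul_newton_subset a hgraded p q hq ⟨_, hxp, rfl⟩
  have h2 : ((p * q : ℕ) : ℝ) • y ∈ newton (a (p * q)) := by
    have heq : ((p * q : ℕ) : ℝ) • y = (p : ℝ) • ((q : ℝ) • y) := by
      rw [smul_smul]; push_cast; ring_nf
    rw [heq, mul_comm p q]
    exact smul_newton_subset a hgraded q p hp ⟨_, hyq, rfl⟩
  have heq : ((p * q : ℕ) : ℝ) • (A • x + B • y)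
      = A • (((p * q : ℕ) : ℝ) • x) + B • (((p * q : ℕ) : ℝ) • y) := by
    rw [smul_add, smul_comm, smul_comm ((p * q : ℕ) : ℝ) B]
  rw [heq]
  exact (convex_convexHull ℝ _) h1 h2 hA hB hAB

lemma Qset_upclosed {x d : Fin n → ℝ} (hx : x ∈ Qset a) (hd : ∀ i, 0 ≤ d i) :
    x + d ∈ Qset a := by
  obtain ⟨p, hp, hxp⟩ := hx
  refine ⟨p, hp, ?_⟩
  have heq : (p : ℝ) • (x + d) = (p : ℝ) • x + (p : ℝ) • d := smul_add _ _ _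
  rw [heq]
  exact newton_upclosed hxp (fun i => by
    simp only [Pi.smul_apply, smul_eq_mul]
    have := hd i
    positivity)

/-- The set whose infimum is `T := inf_p T_p / p`. -/
def TTset : Set ℝ :=
  {r : ℝ | ∃ p : ℕ, 1 ≤ p ∧ r = sInf (Mset (a p)) / p}

lemma TTset_nonempty : (TTset a).Nonempty := ⟨_, 1, le_refl 1, rfl⟩

lemma TTset_bddBelow : BddBelow (TTset a) := by
  refine ⟨0, ?_⟩
  rintro _ ⟨p, hp, rfl⟩
  exact div_nonneg (sInf_Mset_nonneg _) (by positivity)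

lemma TT_nonneg : 0 ≤ sInf (TTset a) :=
  le_csInf (TTset_nonempty a) (by rintro _ ⟨p, hp, rfl⟩; exact div_nonneg (sInf_Mset_nonneg _) (by positivity))

lemma const_not_mem_Qset (hn : 1 ≤ n) {μ : ℝ} (hμ : μ < sInf (TTset a)) :
    (fun _ : Fin n => μ) ∉ Qset a := by
  rintro ⟨p, hp, hmem⟩
  have hppos : (0:ℝ) < p := by exact_mod_cast hp
  have hTTle : sInf (TTset a) ≤ sInf (Mset (a p)) / p :=
    csInf_le (TTset_bddBelow a) ⟨p, hp, rfl⟩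
  have hμ0 : 0 ≤ μ := by
    have h := newton_nonneg hmem ⟨0, hn⟩
    simp only [Pi.smul_apply, smul_eq_mul] at h
    nlinarith
  rcases eq_or_lt_of_le hμ0 with h0 | hpos
  · -- μ = 0
    have hz : (fun _ : Fin n => (0:ℝ)) ∈ newton (a p) := by
      have : (p : ℝ) • (fun _ : Fin n => μ) = (fun _ : Fin n => (0:ℝ)) := by
        funext i; simp [← h0]
      rwa [this] at hmem
    have hall : ∀ ν : ℝ, 0 < ν → ν ∈ Mset (a p) := by
      intro ν hν
      refine ⟨hν, ?_⟩
      have := newton_upclosed hz (d := fun _ => ν) (fun i => hν.le)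
      convert this using 1
      funext i; simp
    have hle0 : sInf (Mset (a p)) ≤ 0 := by
      apply le_of_forall_pos_le_add
      intro ε hε
      have := csInf_le (Mset_bddBelow (a p)) (hall ε hε)
      linarith
    have : sInf (TTset a) ≤ 0 := le_trans hTTle (by
      apply div_nonpos_of_nonpos_of_nonneg hle0 (by positivity))
    rw [← h0] at hμ; linarith
  · -- μ > 0
    have hmem' : (p : ℝ) * μ ∈ Mset (a p) := by
      refine ⟨by positivity, ?_⟩
      have : (fun _ : Fin n => (p:ℝ) * μ) = (p : ℝ) • (fun _ : Fin n => μ) := by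
        funext i; simp
      rw [this]; exact hmem
    have h1 : sInf (Mset (a p)) ≤ (p:ℝ) * μ := csInf_le (Mset_bddBelow _) hmem'
    have h2 : sInf (Mset (a p)) / p ≤ μ := by
      rw [div_le_iff₀ hppos]; linarith [h1]
    linarith

end Graded
end LCAux

namespace LCAux

variable {K : Type*} [Field K] {n : ℕ}

lemma pi_decomp (x : Fin n → ℝ) : x = ∑ i, x i • (Pi.single i (1:ℝ) : Fin n → ℝ) := by
  funext j
  rw [Finset.sum_apply]
  simp only [Pi.smul_apply, smul_eq_mul, Pi.single_apply, mul_ite, mul_one, mul_zero]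
  rw [Finset.sum_ite_eq]
  simp

section Graded

variable (a : ℕ → Ideal (MvPolynomial (Fin n) K))

lemma exists_supporting (hn : 1 ≤ n)
    (hgraded : ∀ p q : ℕ, a p * a q ≤ a (p + q))
    (hmon1 : IsMonomialIdeal (a 1)) (hne1 : a 1 ≠ ⊥)
    {μ : ℝ} (hμ : μ < sInf (TTset a)) :
    ∃ w : Fin n → ℝ, (∀ i, 0 ≤ w i) ∧ (∑ i, w i) = 1 ∧
      ∀ x ∈ Qset a, μ ≤ ∑ i, w i * x i := by
  obtain ⟨v₁, hv₁⟩ := exists_exp hmon1 hne1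
  set x₀ : Fin n → ℝ := fun i => (v₁ i : ℝ) + 1 with hx₀_def
  set U : Set (Fin n → ℝ) := ⋂ i, {x | (v₁ i : ℝ) < x i} with hU_def
  have hUopen : IsOpen U := isOpen_iInter_of_finite fun i =>
    isOpen_Ioi.preimage (continuous_apply i)
  have hUQ : U ⊆ Qset a := by
    intro x hx
    simp only [hU_def, Set.mem_iInter, Set.mem_setOf_eq] at hx
    refine ⟨1, le_refl 1, ?_⟩
    have h1 : ((1:ℕ):ℝ) • x = x := by rw [Nat.cast_one, one_smul]
    rw [h1]
    have hup := newton_upclosed (exp_mem_newton hv₁) (d := fun i => x i - (v₁ i:ℝ))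
      (fun i => sub_nonneg.mpr (hx i).le)
    convert hup using 1
    funext i; simp
  have hx₀U : x₀ ∈ U := by
    simp only [hU_def, Set.mem_iInter, Set.mem_setOf_eq, hx₀_def]
    intro i; linarith
  have hx₀int : x₀ ∈ interior (Qset a) := interior_maximal hUQ hUopen hx₀U
  have hQconv := Qset_convex a hgraded
  have hnotmem : (fun _ : Fin n => μ) ∉ interior (Qset a) :=
    fun h => const_not_mem_Qset a hn hμ (interior_subset h)
  obtain ⟨f, hf⟩ := geometric_hahn_banach_open_point (hQconv.interior) isOpen_interior hnotmem
  have hfx₀ : f x₀ < f (fun _ => μ) := hf x₀ hx₀int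
  have hfQ : ∀ x ∈ Qset a, f x ≤ f (fun _ => μ) := by
    intro x hx
    by_contra hgt
    push_neg at hgt
    set δ := f x - f (fun _ : Fin n => μ) with hδ_def
    have hδ : 0 < δ := by rw [hδ_def]; linarith
    set M := max (f x - f x₀) 1 with hM_def
    have hM : 0 < M := lt_of_lt_of_le one_pos (le_max_right _ _)
    set c := min (1/2) (δ / (2 * M)) with hc_def
    have hc0 : 0 < c := lt_min (by norm_num) (by positivity)
    have hc1 : c ≤ 1/2 := min_le_left _ _
    have hcM : c * M ≤ δ / 2 := by
      have hle := min_le_right (1/2) (δ / (2*M))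
      calc c * M ≤ (δ / (2*M)) * M := by nlinarith [hM]
        _ = δ / 2 := by field_simp
    have hcombo := hQconv.combo_interior_self_mem_interior hx₀int hx hc0
      (by linarith : (0:ℝ) ≤ 1 - c) (by ring)
    have hlt := hf _ hcombo
    rw [map_add, map_smul, map_smul] at hlt
    simp only [smul_eq_mul] at hlt
    have hfx : f x - f x₀ ≤ M := le_max_left _ _
    nlinarith [hc0, hδ, hcM, hfx, hlt]
  set w' : Fin n → ℝ := fun i => -(f (Pi.single i (1:ℝ))) with hw'_def
  have hx₀Q : x₀ ∈ Qset a := interior_subset hx₀int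
  have hw'0 : ∀ i, 0 ≤ w' i := by
    intro i
    by_contra hneg
    push_neg at hneg
    have hfi : 0 < f (Pi.single i (1:ℝ)) := by
      have : w' i = -(f (Pi.single i (1:ℝ))) := rfl
      linarith [this ▸ hneg]
    have hnum : 0 < f (fun _ : Fin n => μ) - f x₀ + 1 := by linarith
    set t := (f (fun _ : Fin n => μ) - f x₀ + 1) / f (Pi.single i (1:ℝ)) with ht_def
    have ht : 0 < t := div_pos hnum hfi
    have hmem : x₀ + t • (Pi.single i (1:ℝ) : Fin n → ℝ) ∈ Qset a :=
      Qset_upclosed a hx₀Q (fun j => by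
        simp only [Pi.smul_apply, smul_eq_mul, Pi.single_apply]
        split_ifs <;> nlinarith [ht])
    have hle := hfQ _ hmem
    rw [map_add, map_smul] at hle
    simp only [smul_eq_mul] at hle
    rw [ht_def, div_mul_cancel₀ _ (ne_of_gt hfi)] at hle
    linarith
  have hfdecomp : ∀ x : Fin n → ℝ, f x = ∑ i, x i * f (Pi.single i (1:ℝ)) := by
    intro x
    conv_lhs => rw [pi_decomp x]
    rw [map_sum]
    simp only [map_smul, smul_eq_mul]
  set s := ∑ i, w' i with hs_def
  have hs0 : 0 ≤ s := Finset.sum_nonneg fun i _ => hw'0 i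
  have hfs : ∑ i, f (Pi.single i (1:ℝ)) = -s := by
    rw [hs_def]
    rw [← Finset.sum_neg_distrib]
    simp [hw'_def]
  have hspos : 0 < s := by
    rcases eq_or_lt_of_le hs0 with h0 | h; swap
    · exact h
    exfalso
    have hallzero : ∀ i, w' i = 0 := by
      intro i
      have := (Finset.sum_eq_zero_iff_of_nonneg (fun j _ => hw'0 j)).mp h0.symm
      exact this i (Finset.mem_univ i)
    have hfzero : ∀ x : Fin n → ℝ, f x = 0 := by
      intro x
      rw [hfdecomp x]
      apply Finset.sum_eq_zero
      intro i _
      have h2 : f (Pi.single i (1:ℝ)) = 0 := by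
        have h3 := hallzero i
        have h4 : -(f (Pi.single i (1:ℝ))) = 0 := h3
        linarith
      rw [h2, mul_zero]
    rw [hfzero x₀, hfzero (fun _ => μ)] at hfx₀
    exact lt_irrefl 0 hfx₀
  refine ⟨fun i => w' i / s, fun i => div_nonneg (hw'0 i) hs0, ?_, ?_⟩
  · rw [← Finset.sum_div, ← hs_def, div_self (ne_of_gt hspos)]
  · intro x hx
    have hfle := hfQ x hx
    have hfc : f (fun _ : Fin n => μ) = -(μ * s) := by
      rw [hfdecomp, ← Finset.mul_sum, hfs]
      ring
    have hfx_eq : f x = -(∑ i, w' i * x i) := by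
      rw [hfdecomp x]
      have hterm : ∀ i, x i * f (Pi.single i (1:ℝ)) = -(w' i * x i) := by
        intro i
        have : w' i = -(f (Pi.single i (1:ℝ))) := rfl
        rw [this]; ring
      rw [Finset.sum_congr rfl (fun i _ => hterm i), Finset.sum_neg_distrib]
    rw [hfx_eq, hfc] at hfle
    have hkey : μ * s ≤ ∑ i, w' i * x i := by linarith
    have hrw : ∑ i, (w' i / s) * x i = (∑ i, w' i * x i) / s := by
      rw [Finset.sum_div]
      exact Finset.sum_congr rfl (fun i _ => by ring)
    rw [hrw, le_div_iff₀ hspos]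
    linarith

end Graded
end LCAux

namespace LCAux

variable {K : Type*} [Field K] {n : ℕ}

section Graded

variable (a : ℕ → Ideal (MvPolynomial (Fin n) K))

lemma const_mem_Mset_asymp
    (hmon : ∀ m : ℕ, IsMonomialIdeal (a m)) (hne : ∀ m : ℕ, a m ≠ ⊥)
    (m : ℕ) (hm : 1 ≤ m) {ε : ℝ} (hε : 0 < ε) :
    (m : ℝ) * sInf (TTset a) + ε ∈ Mset (asympMultiplierIdeal a m) := by
  set TT := sInf (TTset a) with hTT_def
  have hTT0 : 0 ≤ TT := TT_nonneg a
  have hmpos : (0:ℝ) < m := by exact_mod_cast hm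
  set μ : ℝ := (m:ℝ) * TT + ε with hμ_def
  have hμpos : 0 < μ := by positivity
  -- find p and ν
  have hlt : sInf (TTset a) < TT + ε / (2*m) := by
    rw [← hTT_def]; have : 0 < ε / (2*m) := by positivity
    linarith
  obtain ⟨r, ⟨p, hp, rfl⟩, hr⟩ := (csInf_lt_iff (TTset_bddBelow a) (TTset_nonempty a)).mp hlt
  have hppos : (0:ℝ) < p := by exact_mod_cast hp
  have hTp : sInf (Mset (a p)) < (p:ℝ) * (TT + ε/(2*m)) := by
    rw [div_lt_iff₀ hppos] at hr; linarith
  obtain ⟨ν, hνmem, hν⟩ :=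
    (csInf_lt_iff (Mset_bddBelow _) (Mset_nonempty (hmon p) (hne p))).mp hTp
  set q : ℝ := (m:ℝ)/(p:ℝ) with hq_def
  have hqpos : 0 < q := by positivity
  have hc : q * ν < μ := by
    have h1 : q * ν < q * ((p:ℝ) * (TT + ε/(2*m))) := by
      exact mul_lt_mul_of_pos_left hν hqpos
    have h2 : q * ((p:ℝ) * (TT + ε/(2*m))) = (m:ℝ)*TT + ε/2 := by
      rw [hq_def]; field_simp
    rw [h2] at h1
    rw [hμ_def]; linarith
  set N : ℕ := ⌊μ⌋₊ with hN_def
  have hN1 : (N:ℝ) ≤ μ := Nat.floor_le hμpos.le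
  have hN2 : μ < (N:ℝ) + 1 := Nat.lt_floor_add_one μ
  set v : Fin n →₀ ℕ := Finsupp.equivFunOnFinite.symm (fun _ : Fin n => N) with hv_def
  have hvi : ∀ i, v i = N := fun i => by simp [hv_def]
  -- interior membership
  set U : Set (Fin n → ℝ) := ⋂ i, {x | q * ν < x i} with hU_def
  have hUopen : IsOpen U := isOpen_iInter_of_finite fun i =>
    isOpen_Ioi.preimage (continuous_apply i)
  have hUsub : U ⊆ q • newton (a p) := by
    intro x hx
    simp only [hU_def, Set.mem_iInter, Set.mem_setOf_eq] at hx
    rw [Set.mem_smul_set_iff_inv_smul_mem₀ (ne_of_gt hqpos)]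
    have hup := newton_upclosed hνmem.2 (d := fun i => q⁻¹ * x i - ν) (fun i => by
      have h1 : q⁻¹ * (q*ν) ≤ q⁻¹ * x i := mul_le_mul_of_nonneg_left (hx i).le (by positivity)
      have h2 : q⁻¹ * (q*ν) = ν := by field_simp
      show 0 ≤ q⁻¹ * x i - ν
      linarith)
    convert hup using 1
    funext i
    simp only [Pi.smul_apply, smul_eq_mul, Pi.add_apply]
    ring
  have hmemU : (fun i => ((v i : ℕ):ℝ) + 1) ∈ U := by
    simp only [hU_def, Set.mem_iInter, Set.mem_setOf_eq]
    intro i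
    rw [hvi i]
    linarith
  have hint : (fun i => ((v i : ℕ):ℝ) + 1) ∈ interior (q • newton (a p)) :=
    interior_maximal hUsub hUopen hmemU
  have hmono : monomial v (1:K) ∈ asympMultiplierIdeal a m :=
    Ideal.subset_span ⟨v, ⟨p, hp, hint⟩, rfl⟩
  refine ⟨hμpos, ?_⟩
  have hup := newton_upclosed (exp_mem_newton hmono) (d := fun i => μ - ((v i : ℕ):ℝ))
    (fun i => by show (0:ℝ) ≤ μ - ((v i : ℕ):ℝ); rw [hvi i]; linarith)
  convert hup using 1
  funext i; simp

lemma sInf_Mset_asymp_le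
    (hmon : ∀ m : ℕ, IsMonomialIdeal (a m)) (hne : ∀ m : ℕ, a m ≠ ⊥)
    (m : ℕ) (hm : 1 ≤ m) :
    sInf (Mset (asympMultiplierIdeal a m)) ≤ (m : ℝ) * sInf (TTset a) := by
  apply le_of_forall_pos_le_add
  intro ε hε
  exact csInf_le (Mset_bddBelow _) (const_mem_Mset_asymp a hmon hne m hm hε)

lemma Mset_asymp_nonempty
    (hmon : ∀ m : ℕ, IsMonomialIdeal (a m)) (hne : ∀ m : ℕ, a m ≠ ⊥)
    (m : ℕ) (hm : 1 ≤ m) : (Mset (asympMultiplierIdeal a m)).Nonempty :=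
  ⟨_, const_mem_Mset_asymp a hmon hne m hm one_pos⟩

lemma le_sInf_Mset_asymp (hn : 1 ≤ n)
    (hgraded : ∀ p q : ℕ, a p * a q ≤ a (p + q))
    (hmon : ∀ m : ℕ, IsMonomialIdeal (a m)) (hne : ∀ m : ℕ, a m ≠ ⊥)
    (m : ℕ) (hm : 1 ≤ m) {μ : ℝ} (hμ : μ < sInf (TTset a)) :
    (m : ℝ) * μ - 1 ≤ sInf (Mset (asympMultiplierIdeal a m)) := by
  apply le_csInf (Mset_asymp_nonempty a hmon hne m hm)
  intro μ' hμ'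
  have hmpos : (0:ℝ) < m := by exact_mod_cast hm
  obtain ⟨w, hw0, hwsum, hwQ⟩ := exists_supporting a hn hgraded (hmon 1) (hne 1) hμ
  have hgen : ∀ s : Fin n →₀ ℕ, (∃ p : ℕ, 1 ≤ p ∧
      (fun i => ((s i : ℕ) : ℝ) + 1) ∈ interior (((m:ℝ)/(p:ℝ)) • newton (a p))) →
      (m:ℝ) * μ - 1 ≤ ∑ i, w i * ((s i : ℕ) : ℝ) := by
    rintro s ⟨p, hp, hint⟩
    have hppos : (0:ℝ) < p := by exact_mod_cast hp
    have hmem := interior_subset hint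
    rw [Set.mem_smul_set_iff_inv_smul_mem₀ (by positivity : ((m:ℝ)/(p:ℝ)) ≠ 0)] at hmem
    have hyQ : ((m:ℝ))⁻¹ • (fun i => ((s i : ℕ):ℝ) + 1) ∈ Qset a := by
      refine ⟨p, hp, ?_⟩
      have heq : (p:ℝ) • ((m:ℝ))⁻¹ • (fun i => ((s i : ℕ):ℝ)+1)
          = ((m:ℝ)/(p:ℝ))⁻¹ • (fun i => ((s i : ℕ):ℝ)+1) := by
        rw [smul_smul, inv_div, div_eq_mul_inv]
      rw [heq]
      exact hmem
    have hbound := hwQ _ hyQ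
    have hsimp : ∑ i, w i * (((m:ℝ))⁻¹ • (fun i => ((s i : ℕ):ℝ)+1)) i
        = (m:ℝ)⁻¹ * ((∑ i, w i * ((s i : ℕ):ℝ)) + 1) := by
      simp only [Pi.smul_apply, smul_eq_mul]
      conv_rhs => rw [← hwsum]
      rw [← Finset.sum_add_distrib, Finset.mul_sum]
      exact Finset.sum_congr rfl fun i _ => by ring
    rw [hsimp] at hbound
    have h3 : (m:ℝ) * ((m:ℝ)⁻¹ * ((∑ i, w i * ((s i : ℕ):ℝ)) + 1))
        = (∑ i, w i * ((s i : ℕ):ℝ)) + 1 := by field_simp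
    nlinarith [mul_le_mul_of_nonneg_left hbound hmpos.le]
  have hH : newton (asympMultiplierIdeal a m) ⊆
      {x : Fin n → ℝ | (m:ℝ)*μ - 1 ≤ ∑ i, w i * x i} := by
    apply convexHull_min
    · rintro _ ⟨u, hu, rfl⟩
      classical
      have husup : u ∈ (monomial u (1:K)).support := by
        rw [support_monomial, if_neg one_ne_zero]
        exact Finset.mem_singleton_self u
      obtain ⟨si, hsi, hle⟩ := MvPolynomial.mem_ideal_span_monomial_image.mp hu u husup
      have hsg := hgen si hsi
      have hmono2 : ∑ i, w i * ((si i : ℕ):ℝ) ≤ ∑ i, w i * ((u i : ℕ):ℝ) :=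
        Finset.sum_le_sum fun i _ => mul_le_mul_of_nonneg_left
          (by exact_mod_cast (Finsupp.le_def.mp hle i)) (hw0 i)
      exact le_trans hsg hmono2
    · intro x hx y hy A B hA hB hAB
      simp only [Set.mem_setOf_eq] at hx hy ⊢
      have hsum : ∑ i, w i * (A • x + B • y) i
          = A * (∑ i, w i * x i) + B * (∑ i, w i * y i) := by
        rw [Finset.mul_sum, Finset.mul_sum, ← Finset.sum_add_distrib]
        exact Finset.sum_congr rfl fun i _ => by
          simp only [Pi.add_apply, Pi.smul_apply, smul_eq_mul]; ring
      rw [hsum]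
      have h1 := mul_le_mul_of_nonneg_left hx hA
      have h2 := mul_le_mul_of_nonneg_left hy hB
      have h3 : A*((m:ℝ)*μ-1) + B*((m:ℝ)*μ-1) = (m:ℝ)*μ-1 := by
        rw [← add_mul, hAB, one_mul]
      linarith
  have hmem := hH hμ'.2
  simp only [Set.mem_setOf_eq] at hmem
  have hcm : ∑ i, w i * μ' = μ' := by
    rw [← Finset.sum_mul, hwsum, one_mul]
  rw [hcm] at hmem
  exact hmem

end Graded
end LCAux

namespace LCAux

open scoped ENNReal

variable {K : Type*} [Field K] {n : ℕ}

lemma ennreal_conv (m : ℕ) (hm : 1 ≤ m) (x : ℝ) :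
    (m : ℝ≥0∞) * (ENNReal.ofReal x)⁻¹ = (ENNReal.ofReal (x / (m:ℝ)))⁻¹ := by
  have hmpos : (0:ℝ) < m := by exact_mod_cast hm
  rw [ENNReal.ofReal_div_of_pos hmpos, ENNReal.ofReal_natCast,
    ENNReal.inv_div (Or.inl (ENNReal.natCast_ne_top m))
      (Or.inl (by exact_mod_cast Nat.one_le_iff_ne_zero.mp hm)),
    div_eq_mul_inv]

lemma lcMonomial_eq' (c : Ideal (MvPolynomial (Fin n) K)) :
    (ENNReal.ofReal (sInf (Mset c)))⁻¹
      = (ENNReal.ofReal (sInf {μ : ℝ | 0 < μ ∧ (fun _ : Fin n => μ) ∈ newton c}))⁻¹ := rfl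

end LCAux


/-- For a graded sequence `a_•` of nonzero monomial ideals with asymptotic
multiplier ideals `b_•`, one has `lc(a_•) = lc(b_•)`, i.e.
`sup_{m ≥ 1} m·lc(a_m) = inf_{m ≥ 1} m·lc(b_m)`. -/
theorem lc_gradedSeq_eq_lc_asympMultiplierIdeal
    {K : Type*} [Field K] {n : ℕ} (hn : 1 ≤ n)
    (a : ℕ → Ideal (MvPolynomial (Fin n) K))
    (hgraded : ∀ p q : ℕ, a p * a q ≤ a (p + q))
    (hmon : ∀ m : ℕ, IsMonomialIdeal (a m))
    (hne : ∀ m : ℕ, a m ≠ ⊥)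
    (b : ℕ → Ideal (MvPolynomial (Fin n) K))
    (hb : ∀ m : ℕ, 1 ≤ m → b m = asympMultiplierIdeal a m) :
    (⨆ m : ℕ, ⨆ (_ : 1 ≤ m), (m : ℝ≥0∞) * lcMonomial (a m)) =
      (⨅ m : ℕ, ⨅ (_ : 1 ≤ m), (m : ℝ≥0∞) * lcMonomial (b m)) := by
  classical
  set TT := sInf (LCAux.TTset a) with hTT_def
  have hTT0 : 0 ≤ TT := LCAux.TT_nonneg a
  have hlhs : (⨆ m : ℕ, ⨆ (_ : 1 ≤ m), (m : ℝ≥0∞) * lcMonomial (a m))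
      = (ENNReal.ofReal TT)⁻¹ := by
    have key : (⨅ k : ℕ, ENNReal.ofReal (sInf (LCAux.Mset (a (k+1))) / ((k+1 : ℕ):ℝ)))
        = ENNReal.ofReal TT := by
      apply le_antisymm
      · apply ENNReal.le_of_forall_pos_le_add
        intro ε hε _
        have hεR : (0:ℝ) < (ε:ℝ) := by exact_mod_cast hε
        have hlt : sInf (LCAux.TTset a) < TT + (ε:ℝ) := by rw [← hTT_def]; linarith
        obtain ⟨r, ⟨p, hp, rfl⟩, hr⟩ :=
          (csInf_lt_iff (LCAux.TTset_bddBelow a) (LCAux.TTset_nonempty a)).mp hlt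
        obtain ⟨k, rfl⟩ : ∃ k, p = k + 1 := ⟨p - 1, by omega⟩
        calc (⨅ k : ℕ, ENNReal.ofReal (sInf (LCAux.Mset (a (k+1))) / ((k+1 : ℕ):ℝ)))
            ≤ ENNReal.ofReal (sInf (LCAux.Mset (a (k+1))) / ((k+1 : ℕ):ℝ)) := iInf_le _ k
          _ ≤ ENNReal.ofReal (TT + (ε:ℝ)) := ENNReal.ofReal_le_ofReal hr.le
          _ ≤ ENNReal.ofReal TT + ENNReal.ofReal (ε:ℝ) := ENNReal.ofReal_add_le
          _ = ENNReal.ofReal TT + ε := by rw [ENNReal.ofReal_coe_nnreal]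
      · apply le_iInf
        intro k
        exact ENNReal.ofReal_le_ofReal
          (hTT_def ▸ csInf_le (LCAux.TTset_bddBelow a) ⟨k+1, by omega, rfl⟩)
    apply le_antisymm
    · apply iSup₂_le
      intro m hm
      show (m : ℝ≥0∞) * (ENNReal.ofReal (sInf (LCAux.Mset (a m))))⁻¹ ≤ (ENNReal.ofReal TT)⁻¹
      rw [LCAux.ennreal_conv m hm]
      exact ENNReal.inv_le_inv.mpr (ENNReal.ofReal_le_ofReal
        (hTT_def ▸ csInf_le (LCAux.TTset_bddBelow a) ⟨m, hm, rfl⟩))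
    · rw [← key, ENNReal.inv_iInf]
      apply iSup_le
      intro k
      rw [← LCAux.ennreal_conv (k+1) (by omega) (sInf (LCAux.Mset (a (k+1))))]
      exact le_iSup₂ (f := fun (m : ℕ) (_ : 1 ≤ m) => (m : ℝ≥0∞) * lcMonomial (a m))
        (k+1) (by omega)
  have hSle : ∀ m : ℕ, 1 ≤ m → sInf (LCAux.Mset (asympMultiplierIdeal a m)) ≤ (m:ℝ) * TT :=
    fun m hm => hTT_def ▸ LCAux.sInf_Mset_asymp_le a hmon hne m hm
  have key2 : (⨆ k : ℕ, ENNReal.ofReal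
      (sInf (LCAux.Mset (asympMultiplierIdeal a (k+1))) / ((k+1:ℕ):ℝ)))
      = ENNReal.ofReal TT := by
    apply le_antisymm
    · apply iSup_le
      intro k
      apply ENNReal.ofReal_le_ofReal
      rw [div_le_iff₀ (by positivity : (0:ℝ) < ((k+1:ℕ):ℝ)), mul_comm]
      exact hSle (k+1) (by omega)
    · apply ENNReal.le_of_forall_pos_le_add
      intro ε hε _
      have hεR : (0:ℝ) < (ε:ℝ) := by exact_mod_cast hε
      obtain ⟨k, hk⟩ := exists_nat_gt (2 / (ε:ℝ))
      have hk1 : (0:ℝ) < (k:ℝ)+1 := by positivity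
      have hinv : 1 < ((k:ℝ)+1) * ((ε:ℝ)/2) := by
        rw [← div_lt_iff₀ (by positivity : (0:ℝ) < (ε:ℝ)/2)]
        have heq : 1 / ((ε:ℝ)/2) = 2/(ε:ℝ) := by rw [one_div_div]
        rw [heq]
        have : (k:ℝ) < (k:ℝ) + 1 := by linarith
        linarith [hk]
      have hμlt : TT - (ε:ℝ)/2 < sInf (LCAux.TTset a) := by rw [← hTT_def]; linarith
      have hlow := LCAux.le_sInf_Mset_asymp a hn hgraded hmon hne (k+1) (by omega) hμlt
      set Sk := sInf (LCAux.Mset (asympMultiplierIdeal a (k+1))) with hSk_def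
      have hcast : ((k+1:ℕ):ℝ) = (k:ℝ)+1 := by push_cast; ring
      rw [hcast] at hlow
      have h2 : (TT - (ε:ℝ)) * ((k:ℝ)+1) ≤ Sk := by nlinarith [hlow, hinv]
      have h3 : TT ≤ Sk/((k+1:ℕ):ℝ) + (ε:ℝ) := by
        rw [hcast, ← sub_le_iff_le_add]
        exact (le_div_iff₀ hk1).mpr h2
      calc ENNReal.ofReal TT ≤ ENNReal.ofReal (Sk/((k+1:ℕ):ℝ) + (ε:ℝ)) :=
            ENNReal.ofReal_le_ofReal h3
        _ ≤ ENNReal.ofReal (Sk/((k+1:ℕ):ℝ)) + ENNReal.ofReal (ε:ℝ) := ENNReal.ofReal_add_le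
        _ = ENNReal.ofReal (Sk/((k+1:ℕ):ℝ)) + ε := by rw [ENNReal.ofReal_coe_nnreal]
        _ ≤ (⨆ k : ℕ, ENNReal.ofReal
              (sInf (LCAux.Mset (asympMultiplierIdeal a (k+1))) / ((k+1:ℕ):ℝ))) + ε := by
            gcongr
            exact le_iSup (fun k : ℕ => ENNReal.ofReal
              (sInf (LCAux.Mset (asympMultiplierIdeal a (k+1))) / ((k+1:ℕ):ℝ))) k
  have hrhs : (⨅ m : ℕ, ⨅ (_ : 1 ≤ m), (m : ℝ≥0∞) * lcMonomial (b m))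
      = (ENNReal.ofReal TT)⁻¹ := by
    apply le_antisymm
    · rw [← key2, ENNReal.inv_iSup]
      apply le_iInf
      intro k
      rw [← LCAux.ennreal_conv (k+1) (by omega)]
      have hstep : (⨅ m : ℕ, ⨅ (_ : 1 ≤ m), (m : ℝ≥0∞) * lcMonomial (b m))
          ≤ ((k+1:ℕ) : ℝ≥0∞) * lcMonomial (b (k+1)) :=
        iInf₂_le (k+1) (by omega)
      have hbeq : lcMonomial (b (k+1))
          = (ENNReal.ofReal (sInf (LCAux.Mset (asympMultiplierIdeal a (k+1)))))⁻¹ := by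
        rw [hb (k+1) (by omega)]; rfl
      rw [hbeq] at hstep
      exact hstep
    · apply le_iInf₂
      intro m hm
      have hmpos : (0:ℝ) < m := by exact_mod_cast hm
      have hbeq : lcMonomial (b m)
          = (ENNReal.ofReal (sInf (LCAux.Mset (asympMultiplierIdeal a m))))⁻¹ := by
        rw [hb m hm]; rfl
      rw [hbeq, LCAux.ennreal_conv m hm]
      exact ENNReal.inv_le_inv.mpr (ENNReal.ofReal_le_ofReal
        ((div_le_iff₀ hmpos).mpr (by rw [mul_comm]; exact hSle m hm)))
  rw [hlhs, hrhs]
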